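/- For all real numbers A > 0, B ≥ 0 and a > 0, ∫_a^∞ exp(−A·v² − B/v²) dv = (1/(2√A))·[ exp(−2√(A·B))·∫_{√A·a − √B/a}^∞ exp(−u²) du + exp(2√(A·B))·∫_{√A·a + √B/a}^∞ exp(−u²) du ]. -/

import Mathlib

open MeasureTheory Real Set
open Filter

private lemma gauss_integrable : Integrable (fun u : ℝ => Real.exp (-u ^ 2)) := by
  have := integrable_exp_neg_mul_sq (b := 1) one_pos
  simpa using this

private lemma gauss_eq (c : ℝ) : (∫ u in Ioi c, Real.exp (-u ^ 2)) =
    (∫ u, Real.exp (-u ^ 2)) - ∫ u in Iic c, Real.exp (-u ^ 2) := by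
  have h := integral_add_compl (measurableSet_Iic (a := c)) gauss_integrable (μ := volume)
  rw [compl_Iic] at h
  linarith

private lemma gauss_hasDerivAt (c : ℝ) :
    HasDerivAt (fun c : ℝ => ∫ u in Ioi c, Real.exp (-u ^ 2)) (-Real.exp (-c ^ 2)) c := by
  have hg := gauss_integrable
  have heq : (fun c : ℝ => ∫ u in Ioi c, Real.exp (-u ^ 2)) =
      fun c : ℝ => ((∫ u, Real.exp (-u ^ 2)) - (∫ u in Iic 0, Real.exp (-u ^ 2)))
        - ∫ u in (0:ℝ)..c, Real.exp (-u ^ 2) := by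
    funext c
    rw [gauss_eq, ← intervalIntegral.integral_Iic_sub_Iic hg.integrableOn hg.integrableOn]
    ring
  rw [heq]
  have hd : HasDerivAt (fun c : ℝ => ∫ u in (0:ℝ)..c, Real.exp (-u ^ 2))
      (Real.exp (-c ^ 2)) c := by
    exact intervalIntegral.integral_hasDerivAt_right hg.intervalIntegrable
      hg.aestronglyMeasurable.stronglyMeasurableAtFilter
      (by fun_prop)
  have := (hasDerivAt_const c ((∫ u, Real.exp (-u ^ 2)) - (∫ u in Iic 0, Real.exp (-u ^ 2)))).sub hd
  rw [zero_sub] at this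
  exact this

private lemma gauss_tendsto :
    Tendsto (fun c : ℝ => ∫ u in Ioi c, Real.exp (-u ^ 2)) atTop (nhds 0) := by
  have h := (aecover_Iic (μ := volume) (l := atTop) tendsto_id).integral_tendsto_of_countably_generated gauss_integrable
  have : Tendsto (fun c : ℝ => (∫ u, Real.exp (-u ^ 2)) - ∫ u in Iic c, Real.exp (-u ^ 2))
      atTop (nhds ((∫ u, Real.exp (-u ^ 2)) - ∫ u, Real.exp (-u ^ 2))) :=
    tendsto_const_nhds.sub h
  simpa [gauss_eq, sub_self] using this


/-- For all real numbers `A > 0`, `B ≥ 0` and `a > 0`,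
`∫_a^∞ exp(−A·v² − B/v²) dv = (1/(2√A))·[exp(−2√(A·B))·∫_{√A·a − √B/a}^∞ exp(−u²) du
+ exp(2√(A·B))·∫_{√A·a + √B/a}^∞ exp(−u²) du]`. -/
theorem stmt_2 (A B a : ℝ) (hA : 0 < A) (hB : 0 ≤ B) (ha : 0 < a) :
    (∫ v in Set.Ioi a, Real.exp (-A * v ^ 2 - B / v ^ 2)) =
      (1 / (2 * Real.sqrt A)) *
        (Real.exp (-2 * Real.sqrt (A * B)) *
            (∫ u in Set.Ioi (Real.sqrt A * a - Real.sqrt B / a), Real.exp (-u ^ 2)) +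
          Real.exp (2 * Real.sqrt (A * B)) *
            (∫ u in Set.Ioi (Real.sqrt A * a + Real.sqrt B / a), Real.exp (-u ^ 2))) := by
  set sA := Real.sqrt A with hsA
  set sB := Real.sqrt B with hsB
  have hsA0 : 0 < sA := Real.sqrt_pos.2 hA
  have hsA2 : sA ^ 2 = A := Real.sq_sqrt hA.le
  have hsB2 : sB ^ 2 = B := Real.sq_sqrt hB
  have hsB0 : 0 ≤ sB := Real.sqrt_nonneg B
  have hAB : Real.sqrt (A * B) = sA * sB := Real.sqrt_mul hA.le B
  set G : ℝ → ℝ := fun c => ∫ u in Ioi c, Real.exp (-u ^ 2) with hG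
  set F : ℝ → ℝ := fun v => -(1 / (2 * sA)) *
      (Real.exp (-(2 * (sA * sB))) * G (sA * v - sB / v)
        + Real.exp (2 * (sA * sB)) * G (sA * v + sB / v)) with hF
  -- derivative of F at every v > 0
  have hderiv : ∀ v : ℝ, 0 < v → HasDerivAt F (Real.exp (-A * v ^ 2 - B / v ^ 2)) v := by
    intro v hv
    have hvne : v ≠ 0 := hv.ne'
    have hu1 : HasDerivAt (fun v : ℝ => sA * v - sB / v) (sA + sB / v ^ 2) v := by
      have h1 : HasDerivAt (fun v : ℝ => sA * v) sA v := by
        simpa using (hasDerivAt_id v).const_mul sA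
      have h2 : HasDerivAt (fun v : ℝ => sB / v) (sB * (-(v ^ 2)⁻¹)) v := by
        simpa [div_eq_mul_inv] using (hasDerivAt_inv hvne).const_mul sB
      have := h1.sub h2
      exact this.congr_deriv (by ring)
    have hu2 : HasDerivAt (fun v : ℝ => sA * v + sB / v) (sA - sB / v ^ 2) v := by
      have h1 : HasDerivAt (fun v : ℝ => sA * v) sA v := by
        simpa using (hasDerivAt_id v).const_mul sA
      have h2 : HasDerivAt (fun v : ℝ => sB / v) (sB * (-(v ^ 2)⁻¹)) v := by
        simpa [div_eq_mul_inv] using (hasDerivAt_inv hvne).const_mul sB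
      have := h1.add h2
      exact this.congr_deriv (by ring)
    have hg1 := (gauss_hasDerivAt (sA * v - sB / v)).comp v hu1
    have hg2 := (gauss_hasDerivAt (sA * v + sB / v)).comp v hu2
    have hd := (((hg1.const_mul (Real.exp (-(2 * (sA * sB))))).add
        (hg2.const_mul (Real.exp (2 * (sA * sB))))).const_mul (-(1 / (2 * sA))))
    refine hd.congr_deriv ?_
    have k1 : Real.exp (-(2 * (sA * sB))) * Real.exp (-(sA * v - sB / v) ^ 2)
        = Real.exp (-A * v ^ 2 - B / v ^ 2) := by
      rw [← Real.exp_add]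
      congr 1
      rw [← hsA2, ← hsB2]
      field_simp
      ring
    have k2 : Real.exp (2 * (sA * sB)) * Real.exp (-(sA * v + sB / v) ^ 2)
        = Real.exp (-A * v ^ 2 - B / v ^ 2) := by
      rw [← Real.exp_add]
      congr 1
      rw [← hsA2, ← hsB2]
      field_simp
      ring
    set E := Real.exp (-A * v ^ 2 - B / v ^ 2) with hE
    set X1 := Real.exp (-(sA * v - sB / v) ^ 2) with hX1
    set X2 := Real.exp (-(sA * v + sB / v) ^ 2) with hX2
    have hne : (2 : ℝ) * sA ≠ 0 := by positivity
    have hinv : sA * sA⁻¹ = 1 := mul_inv_cancel₀ hsA0.ne'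
    linear_combination (1 / (2 * sA) * (sA + sB / v ^ 2)) * k1 + (1 / (2 * sA) * (sA - sB / v ^ 2)) * k2 + E * hinv
  -- integrability
  have hint : IntegrableOn (fun v : ℝ => Real.exp (-A * v ^ 2 - B / v ^ 2)) (Ioi a) := by
    apply Integrable.mono' ((integrable_exp_neg_mul_sq hA).integrableOn)
    · apply Measurable.aestronglyMeasurable
      fun_prop
    · filter_upwards [ae_restrict_mem measurableSet_Ioi] with x hx
      have hx0 : 0 < x := ha.trans hx
      rw [Real.norm_eq_abs, Real.abs_exp]
      apply Real.exp_le_exp.2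
      have : 0 ≤ B / x ^ 2 := by positivity
      linarith
  -- limit at infinity
  have htend : Tendsto F atTop (nhds 0) := by
    have h1 : Tendsto (fun v : ℝ => sA * v - sB / v) atTop atTop := by
      exact (tendsto_id.const_mul_atTop hsA0).atTop_add
        (by simpa [div_eq_mul_inv] using ((tendsto_inv_atTop_zero).const_mul sB).neg :
          Tendsto (fun v : ℝ => -(sB / v)) atTop (nhds (-0))) |>.congr (fun x => by simp only [id_eq]; ring)
    have h2 : Tendsto (fun v : ℝ => sA * v + sB / v) atTop atTop := by
      exact (tendsto_id.const_mul_atTop hsA0).atTop_add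
        (by simpa [div_eq_mul_inv] using ((tendsto_inv_atTop_zero).const_mul sB) :
          Tendsto (fun v : ℝ => sB / v) atTop (nhds 0))
    have t1 := gauss_tendsto.comp h1
    have t2 := gauss_tendsto.comp h2
    have := (((t1.const_mul (Real.exp (-(2 * (sA * sB))))).add
        (t2.const_mul (Real.exp (2 * (sA * sB))))).const_mul (-(1 / (2 * sA))))
    simpa [hF, Function.comp] using this
  have hcont : ContinuousWithinAt F (Ici a) a :=
    (hderiv a ha).continuousAt.continuousWithinAt
  have key := integral_Ioi_of_hasDerivAt_of_tendsto hcont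
    (fun x hx => hderiv x (ha.trans hx)) hint htend
  rw [key, hAB, hF]
  ring_nf
  rfl
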